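/- Let a, c be real numbers with c > a + 1 and a > 0. Define S_{mn} = n! (a)_{m+1} (c-a)_n / ((c)_{m+n} (c+m)_{n+1}) and R_{mn}(z) = S_{mn} · z^{m+n+1} · ₂F₁(a+m+1, n+1; c+m+n+1; z). Then there exists a constant C > 0, depending only on a and c, such that for all positive integers m, n with m ≥ n - 1 and all complex z with |z| < 1, |R_{mn}(z)| ≤ C · (n! / (c)_n) · ((a+1)_m / (c+n)_m) · |z|^{m+n+1}. -/

import Mathlib

/-- The Pochhammer symbol `(x)_k = x (x+1) ⋯ (x+k-1)` for a real number `x`. -/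
noncomputable def poch (x : ℝ) (k : ℕ) : ℝ := ∏ i ∈ Finset.range k, (x + i)

lemma poch_pos {x : ℝ} (hx : 0 < x) (k : ℕ) : 0 < poch x k :=
  Finset.prod_pos fun i _ => by positivity

lemma poch_zero (x : ℝ) : poch x 0 = 1 := by simp [poch]

lemma poch_succ_right (x : ℝ) (k : ℕ) : poch x (k + 1) = poch x k * (x + k) :=
  Finset.prod_range_succ _ _

lemma poch_add (x : ℝ) (j k : ℕ) : poch x (j + k) = poch x j * poch (x + j) k := by
  rw [poch, Finset.prod_range_add]
  congr 1
  exact Finset.prod_congr rfl fun i _ => by push_cast; ring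

lemma poch_succ (x : ℝ) (k : ℕ) : poch x (k + 1) = x * poch (x + 1) k := by
  have h := poch_add x 1 k
  rw [add_comm 1 k] at h
  simpa [poch] using h

/-- Partial sums of the binomial series `(1-t)^{-α}` are bounded by it. -/
lemma partial_binom_le (K : ℕ) : ∀ (α : ℝ), 0 < α → ∀ t : ℝ, 0 ≤ t → t < 1 →
    ∑ k ∈ Finset.range K, poch α k / (Nat.factorial k) * t ^ k ≤ (1 - t) ^ (-α) := by
  induction K with
  | zero =>
    intro α hα t ht0 ht1
    simp [Real.rpow_nonneg (by linarith : (0:ℝ) ≤ 1 - t)]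
  | succ K ih =>
    intro α hα t ht0 ht1
    -- the function h s = (1-s)^(-α) - partial sum is monotone on [0, t]
    set F : ℝ → ℝ := fun s => ∑ k ∈ Finset.range (K + 1), poch α k / (Nat.factorial k) * s ^ k with hF
    set h : ℝ → ℝ := fun s => (1 - s) ^ (-α) - F s with hh
    have hderiv : ∀ s : ℝ, 0 ≤ s → s < 1 → HasDerivAt h
        (α * ((1 - s) ^ (-α - 1) - ∑ j ∈ Finset.range K, poch (α+1) j / (Nat.factorial j) * s ^ j)) s := by
      intro s hs0 hs1
      have h1s : (0:ℝ) < 1 - s := by linarith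
      have hG : HasDerivAt (fun y : ℝ => (1 - y) ^ (-α)) (α * (1 - s) ^ (-α - 1)) s := by
        have hbase : HasDerivAt (fun y : ℝ => 1 - y) (-1) s := by
          simpa using (hasDerivAt_id s).const_sub 1
        have hr := (Real.hasDerivAt_rpow_const (p := -α) (Or.inl h1s.ne')).comp s hbase
        refine hr.congr_deriv ?_
        ring
      have hFd : HasDerivAt F (∑ k ∈ Finset.range (K + 1),
          poch α k / (Nat.factorial k) * (k * s ^ (k - 1))) s := by
        apply HasDerivAt.fun_sum
        intro k _
        exact (hasDerivAt_pow k s).const_mul _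
      have hsum : (∑ k ∈ Finset.range (K + 1), poch α k / (Nat.factorial k) * (k * s ^ (k - 1)))
          = α * ∑ j ∈ Finset.range K, poch (α+1) j / (Nat.factorial j) * s ^ j := by
        rw [Finset.sum_range_succ' (fun k => poch α k / (Nat.factorial k) * (k * s ^ (k - 1))) K]
        rw [Finset.mul_sum]
        simp only [Nat.cast_zero, zero_mul, mul_zero, add_zero, Nat.cast_ofNat]
        apply Finset.sum_congr rfl
        intro j _
        have : poch α (j + 1) = α * poch (α + 1) j := poch_succ α j
        rw [this]
        rw [Nat.factorial_succ]
        push_cast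
        have hfj : (Nat.factorial j : ℝ) ≠ 0 := by positivity
        field_simp
      rw [hsum] at hFd
      have := hG.sub hFd
      refine this.congr_deriv ?_
      ring
    -- h is monotone on [0, t]
    have hmono : ∀ s ∈ Set.Icc (0:ℝ) t, h 0 ≤ h s := by
      intro s hs
      rcases eq_or_lt_of_le hs.1 with rfl | hs0
      · exact le_refl _
      · have hconv : Convex ℝ (Set.Icc (0:ℝ) s) := convex_Icc 0 s
        have hlt1 : ∀ x ∈ Set.Icc (0:ℝ) s, x < 1 := fun x hx => by
          have h1 := hx.2; have h2 := hs.2; linarith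
        have hcont : ContinuousOn h (Set.Icc 0 s) := fun x hx =>
          ((hderiv x hx.1 (hlt1 x hx)).continuousAt).continuousWithinAt
        have hint : interior (Set.Icc (0:ℝ) s) = Set.Ioo 0 s := interior_Icc
        have hdiff : DifferentiableOn ℝ h (interior (Set.Icc (0:ℝ) s)) := by
          rw [hint]
          intro x hx
          have hx1 : x < 1 := by have h1 := hx.2; have h2 := hs.2; linarith
          exact ((hderiv x hx.1.le hx1).differentiableAt).differentiableWithinAt
        have hd0 : ∀ x ∈ interior (Set.Icc (0:ℝ) s), 0 ≤ deriv h x := by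
          rw [hint]
          intro x hx
          have hx1 : x < 1 := by have h1 := hx.2; have h2 := hs.2; linarith
          rw [(hderiv x hx.1.le hx1).deriv]
          have hih := ih (α + 1) (by linarith) x hx.1.le hx1
          have : -(α + 1) = -α - 1 := by ring
          rw [this] at hih
          have : 0 ≤ (1 - x) ^ (-α - 1) - ∑ j ∈ Finset.range K, poch (α+1) j / (Nat.factorial j) * x ^ j := by
            linarith
          positivity
        have := monotoneOn_of_deriv_nonneg hconv hcont hdiff hd0
        exact this (Set.left_mem_Icc.mpr hs.1) (Set.mem_Icc.mpr ⟨hs.1, le_refl s⟩) hs.1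
    have hF0 : F 0 = 1 := by
      show (∑ k ∈ Finset.range (K + 1), poch α k / (Nat.factorial k) * (0:ℝ) ^ k) = 1
      rw [Finset.sum_eq_single 0]
      · simp [poch_zero]
      · intro k _ hk
        simp [zero_pow hk]
      · intro hk
        simp at hk
    have h0 : h 0 = 0 := by
      rw [hh]
      simp only [sub_zero, Real.one_rpow, hF0]
      ring
    have hht := hmono t (Set.mem_Icc.mpr ⟨ht0, le_refl t⟩)
    rw [h0, hh] at hht
    simp only [hF] at hht
    linarith

lemma Gamma_poch {x : ℝ} (hx : 0 < x) (k : ℕ) :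
    Real.Gamma (x + k) = Real.Gamma x * poch x k := by
  induction k with
  | zero => simp [poch_zero]
  | succ k ih =>
    have hxk : (0:ℝ) < x + k := by positivity
    have h1 : x + (k + 1 : ℕ) = (x + k) + 1 := by push_cast; ring
    rw [h1, Real.Gamma_add_one hxk.ne', ih, poch_succ_right]
    ring

open MeasureTheory intervalIntegral Set

noncomputable def J (u v : ℝ) : ℝ := ∫ t in (0:ℝ)..1, t ^ (u - 1) * (1 - t) ^ (v - 1)

lemma J_ofReal {u v : ℝ} : ((J u v : ℝ) : ℂ) = Complex.betaIntegral u v := by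
  rw [J, ← intervalIntegral.integral_ofReal, Complex.betaIntegral]
  apply intervalIntegral.integral_congr
  intro x hx
  rw [uIcc_of_le (by norm_num : (0:ℝ) ≤ 1)] at hx
  obtain ⟨hx0, hx1⟩ := hx
  show ((x ^ (u - 1) * (1 - x) ^ (v - 1) : ℝ) : ℂ) = _
  rw [Complex.ofReal_mul, Complex.ofReal_cpow hx0, Complex.ofReal_cpow (by linarith : (0:ℝ) ≤ 1 - x)]
  push_cast
  ring

lemma J_eq {u v : ℝ} (hu : 0 < u) (hv : 0 < v) :
    J u v = Real.Gamma u * Real.Gamma v / Real.Gamma (u + v) := by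
  have huv : Real.Gamma (u + v) ≠ 0 := (Real.Gamma_pos_of_pos (by linarith)).ne'
  have hbeta := Complex.Gamma_mul_Gamma_eq_betaIntegral
    (by simpa using hu : 0 < Complex.re u) (by simpa using hv : 0 < Complex.re v)
  apply Complex.ofReal_inj.mp
  rw [J_ofReal]
  have h4 : ((u + v : ℝ) : ℂ) = (u : ℂ) + (v : ℂ) := by push_cast; ring
  have hG : Complex.Gamma ((u : ℂ) + (v : ℂ)) ≠ 0 := by
    rw [← h4, Complex.Gamma_ofReal]; exact_mod_cast huv
  have hBval : Complex.betaIntegral u v =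
      Complex.Gamma u * Complex.Gamma v / Complex.Gamma ((u : ℂ) + (v : ℂ)) := by
    rw [eq_div_iff hG, mul_comm (Complex.betaIntegral _ _)]
    exact hbeta.symm
  rw [hBval, ← h4, Complex.Gamma_ofReal, Complex.Gamma_ofReal, Complex.Gamma_ofReal,
    ← Complex.ofReal_mul, ← Complex.ofReal_div]

lemma J_pos {u v : ℝ} (hu : 0 < u) (hv : 0 < v) : 0 < J u v := by
  rw [J_eq hu hv]
  have := Real.Gamma_pos_of_pos hu
  have := Real.Gamma_pos_of_pos hv
  have := Real.Gamma_pos_of_pos (by linarith : 0 < u + v)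
  positivity

lemma J_integrable {u v : ℝ} (hu : 0 < u) (hv : 0 < v) :
    IntervalIntegrable (fun t : ℝ => t ^ (u - 1) * (1 - t) ^ (v - 1)) volume 0 1 := by
  have hc : IntervalIntegrable (fun x : ℝ =>
      (x : ℂ) ^ ((u:ℂ) - 1) * (1 - (x : ℂ)) ^ ((v:ℂ) - 1)) volume 0 1 :=
    Complex.betaIntegral_convergent (by simpa using hu) (by simpa using hv)
  rw [intervalIntegrable_iff_integrableOn_Ioc_of_le (by norm_num : (0:ℝ) ≤ 1)] at hc ⊢
  apply hc.re.congr
  rw [Filter.EventuallyEq, ae_restrict_iff' measurableSet_Ioc]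
  apply Filter.Eventually.of_forall
  intro x hx
  obtain ⟨hx0, hx1⟩ := hx
  show ((x:ℂ) ^ ((u:ℂ) - 1) * (1 - (x:ℂ)) ^ ((v:ℂ) - 1)).re = _
  rw [show ((u:ℂ) - 1) = ((u - 1 : ℝ) : ℂ) by push_cast; ring,
    show ((v:ℂ) - 1) = ((v - 1 : ℝ) : ℂ) by push_cast; ring,
    show ((1:ℂ) - (x:ℂ)) = ((1 - x : ℝ) : ℂ) by push_cast; ring,
    ← Complex.ofReal_cpow hx0.le, ← Complex.ofReal_cpow (by linarith : (0:ℝ) ≤ 1 - x),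
    ← Complex.ofReal_mul, Complex.ofReal_re]

lemma J_ratio {β v : ℝ} (hβ : 0 < β) (hv : 0 < v) (k : ℕ) :
    J (β + k) v = J β v * poch β k / poch (β + v) k := by
  have hβk : (0:ℝ) < β + k := by positivity
  have hβv : (0:ℝ) < β + v := by linarith
  rw [J_eq hβk hv, J_eq hβ hv]
  rw [show β + (k:ℝ) + v = (β + v) + (k:ℝ) by ring]
  rw [Gamma_poch hβ k, Gamma_poch hβv k]
  have g1 : Real.Gamma (β + v) ≠ 0 := (Real.Gamma_pos_of_pos hβv).ne'
  have g2 : poch (β + v) k ≠ 0 := (poch_pos hβv k).ne'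
  field_simp

lemma sum_hyp_le {α β ε : ℝ} (hα : 1 < α) (hβ : 1 < β) (hε : 0 < ε) (K : ℕ) :
    ∑ k ∈ Finset.range K, poch α k * poch β k / (poch (β + (α + ε)) k * (Nat.factorial k))
      ≤ J β ε / J β (α + ε) := by
  set v : ℝ := α + ε with hvdef
  have hv : 0 < v := by rw [hvdef]; linarith
  have hβ0 : (0:ℝ) < β := by linarith
  have hJβv : 0 < J β v := J_pos hβ0 hv
  -- rewrite each term via J_ratio
  have hterm : ∀ k : ℕ, poch α k * poch β k / (poch (β + v) k * (Nat.factorial k))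
      = (poch α k / (Nat.factorial k)) * (J (β + k) v / J β v) := by
    intro k
    rw [J_ratio hβ0 hv k]
    have g2 : poch (β + v) k ≠ 0 := (poch_pos (by linarith) k).ne'
    have g3 : (Nat.factorial k : ℝ) ≠ 0 := by positivity
    field_simp
  simp only [hterm]
  have hkey : ∑ k ∈ Finset.range K, poch α k / (Nat.factorial k) * J (β + k) v ≤ J β ε := by
    have hint_k : ∀ k : ℕ, IntervalIntegrable
        (fun t : ℝ => poch α k / (Nat.factorial k) * (t ^ (β + k - 1) * (1 - t) ^ (v - 1)))
        MeasureTheory.volume 0 1 := fun k =>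
      (J_integrable (by positivity) hv).const_mul _
    have hsum_eq : ∑ k ∈ Finset.range K, poch α k / (Nat.factorial k) * J (β + k) v
        = ∫ t in (0:ℝ)..1, ∑ k ∈ Finset.range K,
            poch α k / (Nat.factorial k) * (t ^ (β + k - 1) * (1 - t) ^ (v - 1)) := by
      rw [intervalIntegral.integral_finset_sum (fun k _ => hint_k k)]
      apply Finset.sum_congr rfl
      intro k _
      rw [intervalIntegral.integral_const_mul, J]
    rw [hsum_eq, J]
    have hintsum : IntervalIntegrable (fun t : ℝ => ∑ k ∈ Finset.range K,
        poch α k / (Nat.factorial k) * (t ^ (β + k - 1) * (1 - t) ^ (v - 1)))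
        MeasureTheory.volume 0 1 := by
      have h := IntervalIntegrable.sum (Finset.range K) (fun k _ => hint_k k)
      rw [Finset.sum_fn] at h
      exact h
    apply intervalIntegral.integral_mono_on (by norm_num : (0:ℝ) ≤ 1)
      hintsum (J_integrable hβ0 hε)
    intro t ht
    obtain ⟨ht0, ht1⟩ := ht
    rcases eq_or_lt_of_le ht0 with rfl | ht0'
    · -- t = 0
      have hz : ∀ k ∈ Finset.range K,
          poch α k / (Nat.factorial k) * ((0:ℝ) ^ (β + k - 1) * (1 - 0) ^ (v - 1)) = 0 := by
        intro k _
        have hk : (0:ℝ) ≤ (k:ℝ) := Nat.cast_nonneg k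
        rw [Real.zero_rpow (by linarith : β + (k:ℝ) - 1 ≠ 0)]
        ring
      rw [Finset.sum_eq_zero hz]
      positivity
    rcases eq_or_lt_of_le ht1 with rfl | ht1'
    · -- t = 1
      have hz : ∀ k ∈ Finset.range K,
          poch α k / (Nat.factorial k) * ((1:ℝ) ^ (β + k - 1) * (1 - 1) ^ (v - 1)) = 0 := by
        intro k _
        rw [sub_self, Real.zero_rpow (by dsimp [hvdef]; intro h; linarith : v - 1 ≠ 0)]
        ring
      rw [Finset.sum_eq_zero hz]
      positivity
    -- 0 < t < 1
    have h1t : (0:ℝ) < 1 - t := by linarith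
    have hsplit : ∀ k : ℕ, (t:ℝ) ^ (β + k - 1) = t ^ (β - 1) * t ^ k := by
      intro k
      rw [show β + (k:ℝ) - 1 = (β - 1) + (k:ℝ) by ring, Real.rpow_add ht0',
        Real.rpow_natCast]
    calc ∑ k ∈ Finset.range K, poch α k / (Nat.factorial k) * (t ^ (β + k - 1) * (1 - t) ^ (v - 1))
        = t ^ (β - 1) * (1 - t) ^ (v - 1) *
            ∑ k ∈ Finset.range K, poch α k / (Nat.factorial k) * t ^ k := by
          rw [Finset.mul_sum]
          apply Finset.sum_congr rfl
          intro k _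
          rw [hsplit k]
          ring
      _ ≤ t ^ (β - 1) * (1 - t) ^ (v - 1) * (1 - t) ^ (-α) := by
          apply mul_le_mul_of_nonneg_left (partial_binom_le K α (by linarith) t ht0 ht1')
          positivity
      _ = t ^ (β - 1) * (1 - t) ^ (ε - 1) := by
          rw [mul_assoc, ← Real.rpow_add h1t]
          congr 2
          rw [hvdef]
          ring
  calc ∑ k ∈ Finset.range K, poch α k / (Nat.factorial k) * (J (β + k) v / J β v)
      = (∑ k ∈ Finset.range K, poch α k / (Nat.factorial k) * J (β + k) v) / J β v := by
        rw [Finset.sum_div]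
        apply Finset.sum_congr rfl
        intro k _
        ring
    _ ≤ J β ε / J β v := by gcongr

/-- The Gauss hypergeometric series `₂F₁(a, b; c; z)` with real parameters, for a
complex argument `z` (convergent for `|z| < 1`). -/
noncomputable def hyp2F1 (a b c : ℝ) (z : ℂ) : ℂ :=
  ∑' k : ℕ, (((poch a k * poch b k) / (poch c k * (Nat.factorial k)) : ℝ) : ℂ) * z ^ k

/-- The constant `S_{mn} = n! (a)_{m+1} (c-a)_n / ((c)_{m+n} (c+m)_{n+1})`. -/
noncomputable def padeS (m n : ℕ) (a c : ℝ) : ℝ :=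
  (Nat.factorial n) * poch a (m + 1) * poch (c - a) n /
    (poch c (m + n) * poch (c + m) (n + 1))

/-- The Padé remainder `R_{mn}(z) = S_{mn} z^{m+n+1} ₂F₁(a+m+1, n+1; c+m+n+1; z)`. -/
noncomputable def padeR (m n : ℕ) (a c : ℝ) (z : ℂ) : ℂ :=
  ((padeS m n a c : ℝ) : ℂ) * z ^ (m + n + 1) *
    hyp2F1 (a + m + 1) ((n : ℝ) + 1) (c + m + n + 1) z

/-- For `c > a + 1 > 1` there is a constant `C > 0` depending only on `a, c` with
`|R_{mn}(z)| ≤ C (n!/(c)_n) ((a+1)_m/(c+n)_m) |z|^{m+n+1}` for all `m ≥ n - 1`, `|z| < 1`. -/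
theorem pade_remainder_bound_convergent (a c : ℝ) (ha : 0 < a) (hc : c > a + 1) :
    ∃ C : ℝ, 0 < C ∧ ∀ m n : ℕ, 0 < m → 0 < n → n - 1 ≤ m →
      ∀ z : ℂ, ‖z‖ < 1 →
        ‖padeR m n a c z‖ ≤
          C * ((Nat.factorial n) / poch c n) * (poch (a + 1) m / poch (c + n) m) *
            ‖z‖ ^ (m + n + 1) := by
  have hε : (0:ℝ) < c - a - 1 := by linarith
  refine ⟨a / (c - a - 1), by positivity, ?_⟩
  intro m n hm hn hmn z hz
  set α : ℝ := a + m + 1 with hαdef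
  set β : ℝ := (n : ℝ) + 1 with hβdef
  set ε : ℝ := c - a - 1 with hεdef
  have hm0 : (0:ℝ) ≤ (m:ℝ) := Nat.cast_nonneg m
  have hn0 : (0:ℝ) ≤ (n:ℝ) := Nat.cast_nonneg n
  have hn1 : (1:ℝ) ≤ (n:ℝ) := by exact_mod_cast hn
  have hα : 1 < α := by simp only [hαdef]; linarith
  have hβ : 1 < β := by simp only [hβdef]; linarith
  have hαε : 0 < α + ε := by linarith
  -- the series terms
  set t : ℕ → ℝ := fun k => poch α k * poch β k / (poch (β + (α + ε)) k * (Nat.factorial k))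
    with htdef
  have ht_nonneg : ∀ k, 0 ≤ t k := by
    intro k
    simp only [htdef]
    have h1 := poch_pos (by linarith : (0:ℝ) < α) k
    have h2 := poch_pos (by linarith : (0:ℝ) < β) k
    have h3 := poch_pos (by linarith : (0:ℝ) < β + (α + ε)) k
    positivity
  set B : ℝ := J β ε / J β (α + ε) with hBdef
  have hpartial : ∀ K, ∑ k ∈ Finset.range K, t k ≤ B := fun K => sum_hyp_le hα hβ hε K
  have ht_sum : Summable t := summable_of_sum_range_le ht_nonneg hpartial
  have ht_tsum : ∑' k, t k ≤ B := Summable.tsum_le_of_sum_range_le ht_sum hpartial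
  -- bound on the hypergeometric factor
  have hγeq : c + (m:ℝ) + n + 1 = β + (α + ε) := by
    simp only [hαdef, hβdef, hεdef]; ring
  have hhyp : ‖hyp2F1 (a + m + 1) ((n : ℝ) + 1) (c + m + n + 1) z‖ ≤ B := by
    rw [hyp2F1]
    have hterm : ∀ k : ℕ, (((poch (a + m + 1) k * poch ((n:ℝ)+1) k) /
        (poch (c + m + n + 1) k * (Nat.factorial k)) : ℝ) : ℂ) * z ^ k
        = ((t k : ℝ) : ℂ) * z ^ k := by
      intro k
      simp only [htdef]
      rw [hγeq]
    simp only [hterm]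
    have hnorm : ∀ k : ℕ, ‖((t k : ℝ) : ℂ) * z ^ k‖ ≤ t k := by
      intro k
      rw [norm_mul, norm_pow, Complex.norm_real]
      have h1 : ‖z‖ ^ k ≤ 1 := pow_le_one₀ (norm_nonneg z) (le_of_lt hz)
      calc |t k| * ‖z‖ ^ k = t k * ‖z‖ ^ k := by rw [abs_of_nonneg (ht_nonneg k)]
        _ ≤ t k * 1 := by
            apply mul_le_mul_of_nonneg_left h1 (ht_nonneg k)
        _ = t k := mul_one _
    have hsummable_norm : Summable (fun k : ℕ => ‖((t k : ℝ) : ℂ) * z ^ k‖) :=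
      Summable.of_nonneg_of_le (fun k => norm_nonneg _) hnorm ht_sum
    calc ‖∑' k : ℕ, ((t k : ℝ) : ℂ) * z ^ k‖
        ≤ ∑' k : ℕ, ‖((t k : ℝ) : ℂ) * z ^ k‖ := norm_tsum_le_tsum_norm hsummable_norm
      _ ≤ ∑' k, t k := Summable.tsum_le_tsum hnorm hsummable_norm ht_sum
      _ ≤ B := ht_tsum
  -- evaluate B
  have hB_eval : B = poch (α + ε) (n + 1) / poch ε (n + 1) := by
    rw [hBdef, J_eq (by linarith) hε, J_eq (by linarith) hαε]
    rw [show β + ε = ε + ((n:ℕ) + 1 : ℕ) by simp only [hβdef]; push_cast; ring,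
      show β + (α + ε) = (α + ε) + ((n:ℕ) + 1 : ℕ) by simp only [hβdef]; push_cast; ring]
    rw [Gamma_poch hε (n+1), Gamma_poch hαε (n+1)]
    have g1 : Real.Gamma β ≠ 0 := (Real.Gamma_pos_of_pos (by linarith)).ne'
    have g2 : Real.Gamma ε ≠ 0 := (Real.Gamma_pos_of_pos hε).ne'
    have g3 : Real.Gamma (α + ε) ≠ 0 := (Real.Gamma_pos_of_pos hαε).ne'
    have g4 : poch ε (n+1) ≠ 0 := (poch_pos hε (n+1)).ne'
    have g5 : poch (α + ε) (n+1) ≠ 0 := (poch_pos hαε (n+1)).ne'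
    field_simp
  -- positivity facts for the final algebra
  have hpochca : 0 < poch (c - a) n := poch_pos (by linarith) n
  have hpochc : 0 < poch c (m + n) := poch_pos (by linarith) (m + n)
  have hpochcm : 0 < poch (c + m) (n + 1) := poch_pos (by linarith) (n + 1)
  have hpocha : 0 < poch a (m + 1) := poch_pos ha (m + 1)
  have hS_pos : 0 < padeS m n a c := by
    rw [padeS]
    have hfn : (0:ℝ) < (Nat.factorial n : ℝ) := by positivity
    positivity
  -- the key algebraic identity
  have hkey : padeS m n a c * B = a / (c - a - 1) * ((Nat.factorial n) / poch c n) *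
      (poch (a + 1) m / poch (c + n) m) := by
    rw [hB_eval, padeS]
    rw [show α + ε = c + (m:ℝ) by simp only [hαdef, hεdef]; ring]
    rw [show (ε:ℝ) = c - a - 1 from hεdef]
    rw [show poch (c - a - 1) (n + 1) = (c - a - 1) * poch (c - a) n by
      rw [poch_succ]; congr 1; ring_nf]
    rw [show m + n = n + m from Nat.add_comm m n, poch_add c n m]
    rw [poch_succ a m]
    have e1 : poch c n ≠ 0 := (poch_pos (by linarith) n).ne'
    have e2 : poch (c + n) m ≠ 0 := (poch_pos (by linarith) m).ne'
    have e3 : poch (c + m) (n + 1) ≠ 0 := hpochcm.ne'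
    have e4 : poch (c - a) n ≠ 0 := hpochca.ne'
    have e5 : (c - a - 1) ≠ 0 := hε.ne'
    field_simp
  -- final chain
  rw [padeR]
  rw [norm_mul, norm_mul, Complex.norm_real, norm_pow, Real.norm_eq_abs]
  rw [abs_of_nonneg hS_pos.le]
  calc padeS m n a c * ‖z‖ ^ (m + n + 1) *
        ‖hyp2F1 (a + m + 1) ((n:ℝ) + 1) (c + m + n + 1) z‖
      ≤ padeS m n a c * ‖z‖ ^ (m + n + 1) * B := by
        apply mul_le_mul_of_nonneg_left hhyp
        positivity
    _ = a / (c - a - 1) * ((Nat.factorial n) / poch c n) *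
          (poch (a + 1) m / poch (c + n) m) * ‖z‖ ^ (m + n + 1) := by
        rw [← hkey]; ring
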